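/- Let Ω ⊆ ℝ² be a compact measurable set and let ω : ℝ² × ℝ → ℝ be continuous with ∫_Ω ω(x,y,t) dx dy = 1 for all t ∈ ℝ, and suppose that for every (x,y) ∈ Ω and every t the map t ↦ ω(x,y,t) is differentiable with ∂_t ω(x,y,t) = −(x + y − D₀(t))·ω(x,y,t), where D₀(t) = ∫_Ω (x+y) ω(x,y,t) dx dy is continuous in t. Then the weight is given explicitly by ω(x,y,t) = e^{−(x+y)t} ω(x,y,0) / ∫_Ω e^{−(x'+y')t} ω(x',y',0) dx' dy' for all (x,y) ∈ Ω and t ∈ ℝ. -/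

import Mathlib

open MeasureTheory

/-- A normalized time-dependent weight on a compact set `Ω` satisfying the differential
equation `∂_t ω = −(x + y − D₀(t)) ω`, with `D₀(t) = ∫_Ω (x+y) ω(x,y,t) dx dy`, is given by
`ω(x,y,t) = e^{−(x+y)t} ω(x,y,0) / ∫_Ω e^{−(x'+y')t} ω(x',y',0) dx' dy'`. -/
theorem weight_representation (Ω : Set (ℝ × ℝ)) (ω : ℝ × ℝ → ℝ → ℝ)
    (hΩc : IsCompact Ω) (hΩm : MeasurableSet Ω)
    (hcont : Continuous fun q : (ℝ × ℝ) × ℝ => ω q.1 q.2)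
    (hnorm : ∀ t : ℝ, (∫ p in Ω, ω p t) = 1)
    (hD₀cont : Continuous fun t : ℝ => ∫ p in Ω, (p.1 + p.2) * ω p t)
    (hode : ∀ p ∈ Ω, ∀ t : ℝ,
      HasDerivAt (fun s => ω p s)
        (-(p.1 + p.2 - ∫ q in Ω, (q.1 + q.2) * ω q t) * ω p t) t)
    (hκpos : ∀ t : ℝ, 0 < ∫ q in Ω, Real.exp (-(q.1 + q.2) * t) * ω q 0) :
    ∀ p ∈ Ω, ∀ t : ℝ,
      ω p t = Real.exp (-(p.1 + p.2) * t) * ω p 0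
        / ∫ q in Ω, Real.exp (-(q.1 + q.2) * t) * ω q 0 := by
  set D : ℝ → ℝ := fun t => ∫ p in Ω, (p.1 + p.2) * ω p t with hD
  set E : ℝ → ℝ := fun t => ∫ s in (0:ℝ)..t, D s with hEdef
  have hE : ∀ t : ℝ, HasDerivAt E (D t) t := fun t =>
    (hD₀cont.integral_hasStrictDerivAt 0 t).hasDerivAt
  have hE0 : E 0 = 0 := intervalIntegral.integral_same
  -- key: for p ∈ Ω, ω p t * exp((p.1+p.2)*t - E t) = ω p 0
  have key : ∀ p ∈ Ω, ∀ t : ℝ,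
      ω p t * Real.exp ((p.1 + p.2) * t - E t) = ω p 0 := by
    intro p hp t
    set a : ℝ := p.1 + p.2 with ha
    set g : ℝ → ℝ := fun s => ω p s * Real.exp (a * s - E s) with hg
    have hg' : ∀ s : ℝ, HasDerivAt g 0 s := by
      intro s
      have hinner : HasDerivAt (fun u => a * u - E u) (a - D s) s := by
        exact (by simpa using ((hasDerivAt_id s).const_mul a).sub (hE s) :
          HasDerivAt ((fun y => a * y) - E) (a - D s) s)
      have hexp : HasDerivAt (fun u => Real.exp (a * u - E u))
          (Real.exp (a * s - E s) * (a - D s)) s := hinner.exp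
      have : HasDerivAt g _ s := (hode p hp s).mul hexp
      convert this using 1
      ring
    have hconst : g t = g 0 :=
      is_const_of_deriv_eq_zero (fun s => (hg' s).differentiableAt)
        (fun s => (hg' s).deriv) t 0
    simpa [hg, hE0] using hconst
  intro p hp t
  -- the denominator equals exp (-E t)
  have hden : (∫ q in Ω, Real.exp (-(q.1 + q.2) * t) * ω q 0)
      = Real.exp (-E t) := by
    have : ∀ q ∈ Ω, Real.exp (-(q.1 + q.2) * t) * ω q 0
        = ω q t * Real.exp (-E t) := by
      intro q hq
      rw [← key q hq t]
      rw [show Real.exp (-E t) = Real.exp (-(q.1 + q.2) * t) *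
          Real.exp ((q.1 + q.2) * t - E t) by
        rw [← Real.exp_add]; ring_nf]
      ring
    rw [setIntegral_congr_fun hΩm this, integral_mul_const, hnorm t, one_mul]
  rw [hden]
  have hkey := key p hp t
  have hne : Real.exp (-E t) ≠ 0 := Real.exp_ne_zero _
  rw [eq_div_iff hne, ← hkey]
  have h2 : Real.exp (-(p.1 + p.2) * t) * Real.exp ((p.1 + p.2) * t - E t) = Real.exp (-E t) := by
    rw [← Real.exp_add]; ring_nf
  linear_combination (-(ω p t)) * h2
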